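/- For all L ≥ 1, all n ≥ 0, and all y ∈ Y, one has Δ^L(S^n y) = S^{Σ_y^L(n)}(Δ^L y). -/

import Mathlib

open MeasureTheory Filter Topology
open scoped ENNReal

attribute [local instance] Classical.propDecidable

noncomputable section

/-- The shift map on bi-infinite sequences: `(S x) n = x (n+1)`. -/
def shift {α : Type*} (x : ℤ → α) : ℤ → α := fun n => x (n + 1)

/-- Shift by an arbitrary integer amount `m`. -/
def shiftZ {α : Type*} (m : ℤ) (x : ℤ → α) : ℤ → α := fun n => x (n + m)

/-- A run structure on a bi-infinite sequence `x`: `t k` is the starting index of the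
`k`-th maximal mono-symbol block of `x`, indexed so that block `0` contains position `0`. -/
structure RunStructure (x : ℤ → ℕ) where
  t : ℤ → ℤ
  mono : StrictMono t
  start_nonpos : t 0 ≤ 0
  start_pos : 0 < t 1
  const : ∀ k i : ℤ, t k ≤ i → i < t (k + 1) → x i = x (t k)
  alt : ∀ k : ℤ, x (t (k + 1)) ≠ x (t k)

/-- `d` is the run-length derivative of `x`: `d k` is the length of the `k`-th run. -/
def IsDelta (x d : ℤ → ℕ) : Prop :=
  ∃ r : RunStructure x, ∀ k : ℤ, (d k : ℤ) = r.t (k + 1) - r.t k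

/-- The run-length derivative operator `Δ` (junk value when no derivative exists). -/
def delta (x : ℤ → ℕ) : ℤ → ℕ :=
  if h : ∃ d, IsDelta x d then h.choose else fun _ => 0

/-- A bi-infinite sequence is smooth over `{1,3}` if all its iterated derivatives exist
and take values in `{1,3}`. -/
def SmoothSeq (x : ℤ → ℕ) : Prop :=
  ∀ k : ℕ, ∀ n : ℤ, delta^[k] x n = 1 ∨ delta^[k] x n = 3

/-- The set `X` of bi-infinite smooth sequences over `{1,3}`. -/
def SmoothX : Set (ℤ → ℕ) := {x | SmoothSeq x}

/-- The recoding alphabet: `A = 1`, `B = 3`, `C = 111`, `D = 333`. -/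
inductive ABCD : Type
  | A | B | C | D
deriving DecidableEq

instance : TopologicalSpace ABCD := ⊥
instance : DiscreteTopology ABCD := ⟨rfl⟩
instance : MeasurableSpace ABCD := ⊤

open ABCD

/-- The symbol (1 or 3) of the run encoded by a letter. -/
def sval : ABCD → ℕ
  | A => 1
  | B => 3
  | C => 1
  | D => 3

/-- The length (1 or 3) of the run encoded by a letter; this is also the value of `Δx`
at the corresponding position. -/
def lval : ABCD → ℕ
  | A => 1
  | B => 1
  | C => 3
  | D => 3

/-- `y` is the recoding of `x`: the letter `y k` encodes the `k`-th run of `x`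
(its symbol and its length). -/
def IsRecoding (x : ℤ → ℕ) (y : ℤ → ABCD) : Prop :=
  ∃ r : RunStructure x, ∀ k : ℤ,
    x (r.t k) = sval (y k) ∧ r.t (k + 1) - r.t k = (lval (y k) : ℤ)

/-- The recoding map `rec` (junk value when no recoding exists). -/
def recode (x : ℤ → ℕ) : ℤ → ABCD :=
  if h : ∃ y, IsRecoding x y then h.choose else fun _ => A

/-- The set `Y = rec(X)` of recodings of smooth sequences. -/
def SmoothY : Set (ℤ → ABCD) := recode '' SmoothX

/-- The derivative operator induced on recodings: since `(Δx) i = lval (rec x i)`,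
we have `Δ(rec x) = rec (Δ x) = recode (lval ∘ rec x)`. -/
def deltaY (y : ℤ → ABCD) : ℤ → ABCD := recode fun i => (lval (y i) : ℕ)

/-- `y` is well-aligned: the elementary block of `y` containing coordinate `0` starts
at position `0` (elementary blocks of `y` are exactly the runs of `Δx`, and
`(Δx) i = lval (y i)`). -/
def WellAligned (y : ℤ → ABCD) : Prop := lval (y (-1)) ≠ lval (y 0)

/-- `B_Y^L`: the set of `y ∈ Y` such that `y, Δy, ..., Δ^{L-1} y` are all well-aligned. -/
def BY (L : ℕ) : Set (ℤ → ABCD) :=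
  {y | y ∈ SmoothY ∧ ∀ l < L, WellAligned (deltaY^[l] y)}

/-- `Σ_y^L(n) = #{k ∈ [1,n] : S^k y ∈ B_Y^L}`. -/
def SigY (L : ℕ) (y : ℤ → ABCD) (n : ℕ) : ℕ :=
  ((Finset.Icc 1 n).filter fun k => shift^[k] y ∈ BY L).card

/-- `y` contains an elementary block in `{ABA, DCD}` (for `y ∈ Y`, any such factor is
automatically an elementary block). -/
def HasType0 (y : ℤ → ABCD) : Prop :=
  ∃ i : ℤ, (y i = A ∧ y (i + 1) = B ∧ y (i + 2) = A) ∨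
           (y i = D ∧ y (i + 1) = C ∧ y (i + 2) = D)

/-- `y` contains an elementary block in `{BAB, CDC}`. -/
def HasType1 (y : ℤ → ABCD) : Prop :=
  ∃ i : ℤ, (y i = B ∧ y (i + 1) = A ∧ y (i + 2) = B) ∨
           (y i = C ∧ y (i + 1) = D ∧ y (i + 2) = C)

/-- The type of a recoded sequence: `false` = type 0, `true` = type 1. -/
def typeOf (y : ℤ → ABCD) : Bool := decide (HasType1 y)

/-- The sequence of types of the successive derivatives of a smooth sequence `x`. -/
def TypesX (x : ℤ → ℕ) : ℕ → Bool := fun n => typeOf (recode (delta^[n] x))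

/-- The sequence of types of the successive derivatives of a recoded sequence `y`. -/
def TypesY (y : ℤ → ABCD) : ℕ → Bool := fun n => typeOf (deltaY^[n] y)

/-- `X_τ`: smooth bi-infinite sequences whose type sequence is exactly `τ`. -/
def Xset (τ : ℕ → Bool) : Set (ℤ → ℕ) := {x ∈ SmoothX | TypesX x = τ}

/-- `Y_τ = rec(X_τ)`. -/
def Yset (τ : ℕ → Bool) : Set (ℤ → ABCD) := recode '' Xset τ

/-- A sequence over `{A,B,C,D}` is alternating: no two consecutive symbols in `{A,C}`
and no two consecutive symbols in `{B,D}`. -/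
def Alternating (y : ℤ → ABCD) : Prop := ∀ n : ℤ, sval (y n) ≠ sval (y (n + 1))

/-- The substitutions `φ₀` and `φ₁` on letters. -/
def phiW : Bool → ABCD → List ABCD
  | false, A => [A]
  | false, B => [D]
  | false, C => [A, B, A]
  | false, D => [D, C, D]
  | true, A => [B]
  | true, B => [C]
  | true, C => [B, A, B]
  | true, D => [C, D, C]

/-- `z` is the image of the bi-infinite sequence `y` under the substitution `φ_t`, with
the convention that the image of the letter at position `0` starts at position `0`. -/
def IsSubst (t : Bool) (y z : ℤ → ABCD) : Prop :=
  ∃ u : ℤ → ℤ, u 0 = 0 ∧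
    (∀ k : ℤ, u (k + 1) = u k + (phiW t (y k)).length) ∧
    (∀ k : ℤ, ∀ j : Fin (phiW t (y k)).length, z (u k + (j : ℕ)) = (phiW t (y k)).get j)

/-- The substitution `φ_t` on bi-infinite sequences. -/
def substF (t : Bool) (y : ℤ → ABCD) : ℤ → ABCD :=
  if h : ∃ z, IsSubst t y z then h.choose else y

/-- The composition `φ_{τ₀} ∘ φ_{τ₁} ∘ ⋯ ∘ φ_{τ_{L-1}}`. -/
def substComp (τ : ℕ → Bool) : ℕ → (ℤ → ABCD) → (ℤ → ABCD)
  | 0 => id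
  | L + 1 => substF (τ 0) ∘ substComp (fun n => τ (n + 1)) L

/-- The homographies `h₀` and `h₁`. -/
def hmap : Bool → ℝ × ℝ → ℝ × ℝ
  | false, p => ((1 - p.1) / (3 - 2 * (p.1 + p.2)), (1 / 2 - p.1) / (3 - 2 * (p.1 + p.2)))
  | true, p => ((1 / 2 - p.1) / (3 - 2 * (p.1 + p.2)), (1 - p.1) / (3 - 2 * (p.1 + p.2)))

/-- The square `K = [0,1/2] × [0,1/2]`. -/
def Ksq : Set (ℝ × ℝ) := Set.Icc (0 : ℝ) (1 / 2) ×ˢ Set.Icc (0 : ℝ) (1 / 2)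

/-- The domain `E = {(a,b) ∈ K : a + b ≤ 3/4}`. -/
def Eset : Set (ℝ × ℝ) := {p ∈ Ksq | p.1 + p.2 ≤ 3 / 4}

/-- The composition `h_{t₀} ∘ h_{t₁} ∘ ⋯ ∘ h_{t_L}`. -/
def hComp (t : ℕ → Bool) : ℕ → (ℝ × ℝ → ℝ × ℝ)
  | 0 => hmap (t 0)
  | L + 1 => hComp t L ∘ hmap (t (L + 1))

/-- The point `(a(t), b(t))`, unique point of `⋂_L (h_{t₀} ∘ ⋯ ∘ h_{t_L})(E)`. -/
def abPoint (t : ℕ → Bool) : ℝ × ℝ :=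
  if h : ∃ p : ℝ × ℝ, (⋂ L : ℕ, hComp t L '' Eset) = {p} then h.choose else 0

/-- The number of occurrences of the letter `s` among positions `1, ..., m` of `z`. -/
def letterCount (s : ABCD) (z : ℤ → ABCD) (m : ℕ) : ℕ :=
  ((Finset.Icc 1 m).filter fun k => z (k : ℤ) = s).card

/-- `w` occurs as a factor of `y` at position `i`. -/
def IsFactorAt (w : List ABCD) (y : ℤ → ABCD) (i : ℤ) : Prop :=
  ∀ j : Fin w.length, y (i + (j : ℕ)) = w.get j

/-- The cylinder set `[w]` in `{1,3}^ℤ`. -/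
def cylX (w : List ℕ) : Set (ℤ → ℕ) :=
  {x | ∀ j : Fin w.length, x ((j : ℕ) : ℤ) = w.get j}

/-- The cylinder set `[w]` in `{A,B,C,D}^ℤ`. -/
def cylY (w : List ABCD) : Set (ℤ → ABCD) :=
  {y | ∀ j : Fin w.length, y ((j : ℕ) : ℤ) = w.get j}

/-- The number of occurrences of the finite word `w` in the prefix `x₀ ⋯ x_{n-1}`. -/
def occCount (x : ℤ → ℕ) (w : List ℕ) (n : ℕ) : ℕ :=
  ((Finset.range n).filter fun i =>
    i + w.length ≤ n ∧ ∀ j : Fin w.length, x (((i + (j : ℕ) : ℕ)) : ℤ) = w.get j).card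

/-- A subshift `Z` is minimal if it contains no nonempty proper closed shift-invariant
subset. -/
def ShiftMinimal {α : Type*} [TopologicalSpace α] (Z : Set (ℤ → α)) : Prop :=
  ∀ W : Set (ℤ → α), W ⊆ Z → W.Nonempty → IsClosed W → shift '' W = W → W = Z


section AuxStmt1

variable {x : ℤ → ℕ}

/-- The symbol just before a run start differs from the run's symbol. -/
lemma RunStructure.prevDiff (r : RunStructure x) (k : ℤ) :
    x (r.t k - 1) ≠ x (r.t k) := by
  have h1 : r.t (k - 1) ≤ r.t k - 1 := by
    have := r.mono (show k - 1 < k by omega); omega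
  have h2 : r.t k - 1 < r.t ((k - 1) + 1) := by
    rw [show (k - 1) + 1 = k by ring]; omega
  have h3 : x (r.t k - 1) = x (r.t (k - 1)) := r.const (k - 1) _ h1 h2
  have h4 := r.alt (k - 1)
  rw [show (k - 1) + 1 = k by ring] at h4
  rw [h3]; exact fun h => h4 h.symm

/-- Run structures are unique. -/
lemma t_unique (r r' : RunStructure x) : ∀ k : ℤ, r.t k = r'.t k := by
  have base : ∀ a b : RunStructure x, a.t 0 ≤ b.t 0 → a.t 0 = b.t 0 := by
    intro a b hle
    by_contra hne
    have hlt : a.t 0 < b.t 0 := lt_of_le_of_ne hle hne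
    have hb0 : b.t 0 ≤ 0 := b.start_nonpos
    have ha1 : 0 < a.t 1 := a.start_pos
    have e1 : x (b.t 0 - 1) = x (a.t 0) :=
      a.const 0 _ (by omega) (by rw [zero_add]; omega)
    have e2 : x (b.t 0) = x (a.t 0) :=
      a.const 0 _ (by omega) (by rw [zero_add]; omega)
    exact b.prevDiff 0 (by rw [e1, e2])
  have h0 : r.t 0 = r'.t 0 := by
    rcases le_total (r.t 0) (r'.t 0) with h | h
    · exact base r r' h
    · exact (base r' r h).symm
  have fwd : ∀ k : ℤ, r.t k = r'.t k → r.t (k + 1) = r'.t (k + 1) := by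
    intro k hk
    have key : ∀ a b : RunStructure x, a.t k = b.t k →
        a.t (k + 1) ≤ b.t (k + 1) → a.t (k + 1) = b.t (k + 1) := by
      intro a b hab hle
      by_contra hne
      have hlt : a.t (k + 1) < b.t (k + 1) := lt_of_le_of_ne hle hne
      have hmono : b.t k < a.t (k + 1) := by
        have := a.mono (show k < k + 1 by omega); omega
      have hco : x (a.t (k + 1)) = x (b.t k) := b.const k _ (le_of_lt hmono) hlt
      exact a.alt k (by rw [hco, ← hab])
    rcases le_total (r.t (k + 1)) (r'.t (k + 1)) with h | h
    · exact key r r' hk h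
    · exact (key r' r hk.symm h).symm
  have bwd : ∀ k : ℤ, r.t k = r'.t k → r.t (k - 1) = r'.t (k - 1) := by
    intro k hk
    have key : ∀ a b : RunStructure x, a.t k = b.t k →
        a.t (k - 1) ≤ b.t (k - 1) → a.t (k - 1) = b.t (k - 1) := by
      intro a b hab hle
      by_contra hne
      have hlt : a.t (k - 1) < b.t (k - 1) := lt_of_le_of_ne hle hne
      have hmb : b.t (k - 1) < b.t k := b.mono (by omega)
      have hak : a.t ((k - 1) + 1) = a.t k := by rw [show (k - 1) + 1 = k by ring]
      have e1 : x (b.t (k - 1) - 1) = x (a.t (k - 1)) :=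
        a.const (k - 1) _ (by omega) (by rw [hak]; omega)
      have e2 : x (b.t (k - 1)) = x (a.t (k - 1)) :=
        a.const (k - 1) _ (by omega) (by rw [hak]; omega)
      exact b.prevDiff (k - 1) (by rw [e1, e2])
    rcases le_total (r.t (k - 1)) (r'.t (k - 1)) with h | h
    · exact key r r' hk h
    · exact (key r' r hk.symm h).symm
  intro k
  induction k using Int.induction_on with
  | zero => exact h0
  | succ i ih => exact fwd i ih
  | pred i ih => exact bwd (-i) ih

lemma exists_isDelta (hx : SmoothSeq x) : ∃ d, IsDelta x d := by
  by_contra h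
  have h1 := hx 1 0
  simp only [Function.iterate_one] at h1
  rw [delta, dif_neg h] at h1
  rcases h1 with h1 | h1 <;> simp at h1

lemma isDelta_delta (hx : SmoothSeq x) : IsDelta x (delta x) := by
  have h := exists_isDelta hx
  unfold delta
  rw [dif_pos h]
  exact h.choose_spec

lemma delta_eq {d : ℤ → ℕ} (hd : IsDelta x d) : delta x = d := by
  have hex : ∃ d, IsDelta x d := ⟨d, hd⟩
  unfold delta
  rw [dif_pos hex]
  obtain ⟨r, hr⟩ := hex.choose_spec
  obtain ⟨r', hr'⟩ := hd
  funext k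
  have ht := t_unique r r'
  have h1 := hr k
  have h2 := hr' k
  rw [ht k, ht (k + 1)] at h1
  omega

lemma delta_formula (hx : SmoothSeq x) (r : RunStructure x) (k : ℤ) :
    (delta x k : ℤ) = r.t (k + 1) - r.t k := by
  obtain ⟨r', hr'⟩ := isDelta_delta hx
  rw [hr' k, t_unique r' r k, t_unique r' r (k + 1)]

/-- Encoding of a (symbol, length) pair into a letter. -/
def encABCD (s l : ℕ) : ABCD :=
  if s = 1 then (if l = 1 then A else C) else (if l = 1 then B else D)

lemma isRecoding_recode (hx : SmoothSeq x) : IsRecoding x (recode x) := by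
  have hex : ∃ y, IsRecoding x y := by
    obtain ⟨r, hr⟩ := isDelta_delta hx
    refine ⟨fun k => encABCD (x (r.t k)) (delta x k), r, fun k => ?_⟩
    have hs : x (r.t k) = 1 ∨ x (r.t k) = 3 := hx 0 (r.t k)
    have hl : delta x k = 1 ∨ delta x k = 3 := by
      have := hx 1 k
      simpa using this
    have hrk := hr k
    constructor
    · rcases hs with hs | hs <;> rcases hl with hl | hl <;>
        simp [encABCD, hs, hl, sval]
    · rcases hs with hs | hs <;> rcases hl with hl | hl <;>
        simp only [encABCD, hs, hl] <;> simp [lval] <;> omega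
  unfold recode
  rw [dif_pos hex]
  exact hex.choose_spec

lemma abcd_eq {a b : ABCD} (hs : sval a = sval b) (hl : lval a = lval b) : a = b := by
  cases a <;> cases b <;> simp_all [sval, lval]

lemma isRecoding_unique {y y' : ℤ → ABCD} (h : IsRecoding x y) (h' : IsRecoding x y') :
    y = y' := by
  obtain ⟨r, hr⟩ := h
  obtain ⟨r', hr'⟩ := h'
  funext k
  have ht := t_unique r r'
  refine abcd_eq ?_ ?_
  · rw [← (hr k).1, ← (hr' k).1, ht k]
  · have h1 := (hr k).2
    have h2 := (hr' k).2
    rw [ht k, ht (k + 1)] at h1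
    omega

lemma recode_eq {y : ℤ → ABCD} (h : IsRecoding x y) : recode x = y := by
  have hex : ∃ y, IsRecoding x y := ⟨y, h⟩
  unfold recode
  rw [dif_pos hex]
  exact isRecoding_unique hex.choose_spec h

lemma lval_recode (hx : SmoothSeq x) (k : ℤ) : lval (recode x k) = delta x k := by
  obtain ⟨r, hr⟩ := isRecoding_recode hx
  have h1 := (hr k).2
  have h2 := delta_formula hx r k
  omega

lemma smooth_iter (hx : SmoothSeq x) (k : ℕ) : SmoothSeq (delta^[k] x) := by
  intro j n
  rw [← Function.iterate_add_apply]
  exact hx (j + k) n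

lemma smooth_delta (hx : SmoothSeq x) : SmoothSeq (delta x) :=
  smooth_iter hx 1

lemma strictMono_int_le {f : ℤ → ℤ} (hf : StrictMono f) (a : ℤ) (n : ℕ) :
    f a + n ≤ f (a + n) := by
  induction n with
  | zero => simp
  | succ m ih =>
    have h1 : f (a + m) < f (a + (m + 1 : ℕ)) := by
      apply hf
      push_cast
      omega
    push_cast
    push_cast at ih h1
    omega

lemma runFind (r : RunStructure x) (m : ℤ) : ∃ j, r.t j ≤ m ∧ m < r.t (j + 1) := by
  have key : ∀ jl : ℤ, r.t jl ≤ m → ∃ j, r.t j ≤ m ∧ m < r.t (j + 1) := by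
    intro jl hjl
    have hP : ∃ n : ℕ, m < r.t (jl + n) := by
      refine ⟨(m - r.t jl).toNat + 1, ?_⟩
      have h := strictMono_int_le r.mono jl ((m - r.t jl).toNat + 1)
      push_cast at h ⊢
      omega
    classical
    have hk0 : m < r.t (jl + (Nat.find hP : ℕ)) := Nat.find_spec hP
    have hk0pos : Nat.find hP ≠ 0 := by
      intro h
      rw [h] at hk0
      norm_num at hk0
      omega
    have hprev : ¬ m < r.t (jl + ((Nat.find hP - 1 : ℕ) : ℤ)) :=
      Nat.find_min hP (by omega)
    refine ⟨jl + ((Nat.find hP - 1 : ℕ) : ℤ), by omega, ?_⟩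
    have he : jl + ((Nat.find hP - 1 : ℕ) : ℤ) + 1 = jl + (Nat.find hP : ℕ) := by
      have h1 : (1 : ℕ) ≤ Nat.find hP := Nat.one_le_iff_ne_zero.mpr hk0pos
      push_cast [h1]
      ring
    rw [he]
    exact hk0
  have h := strictMono_int_le r.mono (-(((r.t 0 - m).toNat : ℤ))) (r.t 0 - m).toNat
  rw [show -(((r.t 0 - m).toNat : ℤ)) + ((r.t 0 - m).toNat : ℤ) = 0 by ring] at h
  exact key (-(((r.t 0 - m).toNat : ℤ))) (by omega)

/-- The run structure of a shifted sequence. -/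
def RunStructure.shifted (r : RunStructure x) (m j : ℤ) (h1 : r.t j ≤ m)
    (h2 : m < r.t (j + 1)) : RunStructure (shiftZ m x) where
  t k := r.t (k + j) - m
  mono := fun a b hab => by
    show r.t (a + j) - m < r.t (b + j) - m
    have := r.mono (show a + j < b + j by omega); omega
  start_nonpos := by
    show r.t (0 + j) - m ≤ 0
    rw [zero_add]; omega
  start_pos := by
    show 0 < r.t (1 + j) - m
    rw [show (1 : ℤ) + j = j + 1 by ring]; omega
  const := by
    intro k i hki hik
    have hki' : r.t (k + j) - m ≤ i := hki
    have hik0 : i < r.t ((k + 1) + j) - m := hik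
    show x (i + m) = x (r.t (k + j) - m + m)
    rw [show r.t (k + j) - m + m = r.t (k + j) by ring]
    have hik' : i < r.t ((k + j) + 1) - m := by
      rw [show (k + j) + 1 = (k + 1) + j by ring]; exact hik0
    exact r.const (k + j) (i + m) (by omega) (by omega)
  alt := by
    intro k
    show x (r.t ((k + 1) + j) - m + m) ≠ x (r.t (k + j) - m + m)
    rw [show r.t ((k + 1) + j) - m + m = r.t ((k + j) + 1) by
        rw [show (k + 1) + j = (k + j) + 1 by ring]; ring,
      show r.t (k + j) - m + m = r.t (k + j) by ring]
    exact r.alt (k + j)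

lemma delta_shiftZ (hx : SmoothSeq x) (m : ℤ) :
    ∃ j : ℤ, delta (shiftZ m x) = shiftZ j (delta x) := by
  obtain ⟨r, hr⟩ := isDelta_delta hx
  obtain ⟨j, h1, h2⟩ := runFind r m
  refine ⟨j, delta_eq ⟨r.shifted m j h1 h2, fun k => ?_⟩⟩
  show ((delta x (k + j) : ℕ) : ℤ) = (r.t ((k + 1) + j) - m) - (r.t (k + j) - m)
  rw [delta_formula hx r (k + j), show (k + 1) + j = (k + j) + 1 by ring]
  ring

lemma iter_delta_shiftZ (hx : SmoothSeq x) (k : ℕ) (m : ℤ) :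
    ∃ j : ℤ, delta^[k] (shiftZ m x) = shiftZ j (delta^[k] x) := by
  induction k with
  | zero => exact ⟨m, rfl⟩
  | succ k ih =>
    obtain ⟨j, hj⟩ := ih
    obtain ⟨j', hj'⟩ := delta_shiftZ (smooth_iter hx k) j
    refine ⟨j', ?_⟩
    rw [Function.iterate_succ_apply', hj, hj', Function.iterate_succ_apply']

lemma smooth_shiftZ (hx : SmoothSeq x) (m : ℤ) : SmoothSeq (shiftZ m x) := by
  intro k n
  obtain ⟨j, hj⟩ := iter_delta_shiftZ hx k m
  rw [hj]
  exact hx k (n + j)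

lemma recode_shiftZ_t1 (hx : SmoothSeq x) (r : RunStructure x) :
    recode (shiftZ (r.t 1) x) = shift (recode x) := by
  obtain ⟨r2, hr2⟩ := isRecoding_recode hx
  have ht : r.t 1 = r2.t 1 := t_unique r r2 1
  have h2 : r.t 1 < r2.t (1 + 1) := by
    have := r2.mono (show (1 : ℤ) < 1 + 1 by omega); omega
  refine recode_eq ⟨r2.shifted (r.t 1) 1 (le_of_eq ht.symm) h2, fun k => ?_⟩
  constructor
  · show x (r2.t (k + 1) - r.t 1 + r.t 1) = sval (recode x (k + 1))
    rw [show r2.t (k + 1) - r.t 1 + r.t 1 = r2.t (k + 1) by ring]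
    exact (hr2 (k + 1)).1
  · show (r2.t ((k + 1) + 1) - r.t 1) - (r2.t (k + 1) - r.t 1) =
      (lval (recode x (k + 1)) : ℤ)
    have := (hr2 (k + 1)).2
    omega

lemma smoothY_shift {w : ℤ → ABCD} (hw : w ∈ SmoothY) : shift w ∈ SmoothY := by
  obtain ⟨x, hx, rfl⟩ := hw
  obtain ⟨r, -⟩ := isDelta_delta hx
  exact ⟨shiftZ (r.t 1) x, smooth_shiftZ hx _, recode_shiftZ_t1 hx r⟩

lemma deltaY_recode (hx : SmoothSeq x) : deltaY (recode x) = recode (delta x) := by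
  unfold deltaY
  exact congrArg recode (funext fun i => lval_recode hx i)

lemma smoothY_deltaY {w : ℤ → ABCD} (hw : w ∈ SmoothY) : deltaY w ∈ SmoothY := by
  obtain ⟨x, hx, rfl⟩ := hw
  rw [deltaY_recode hx]
  exact ⟨delta x, smooth_delta hx, rfl⟩

lemma coreStep {w : ℤ → ABCD} (hw : w ∈ SmoothY) :
    deltaY (shift w) =
      if WellAligned (shift w) then shift (deltaY w) else deltaY w := by
  obtain ⟨v, hv, rfl⟩ := hw
  have hz : SmoothSeq (delta v) := smooth_delta hv
  have h1 : deltaY (shift (recode v)) = recode (shiftZ 1 (delta v)) := by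
    unfold deltaY
    exact congrArg recode (funext fun i => lval_recode hv (i + 1))
  have e0 : lval (shift (recode v) (-1)) = delta v 0 := by
    show lval (recode v (-1 + 1)) = delta v 0
    rw [show (-1 : ℤ) + 1 = 0 by norm_num]
    exact lval_recode hv 0
  have e1 : lval (shift (recode v) 0) = delta v 1 := by
    show lval (recode v (0 + 1)) = delta v 1
    rw [show (0 : ℤ) + 1 = 1 by norm_num]
    exact lval_recode hv 1
  have hWA : WellAligned (shift (recode v)) ↔ delta v 0 ≠ delta v 1 := by
    unfold WellAligned
    rw [e0, e1]
  obtain ⟨s, hs⟩ := isRecoding_recode hz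
  by_cases hcase : delta v 0 = delta v 1
  · rw [if_neg (fun h => (hWA.mp h) hcase), h1, deltaY_recode hv]
    have hzc0 : delta v 0 = delta v (s.t 0) := by
      refine s.const 0 0 s.start_nonpos ?_
      rw [zero_add]; exact s.start_pos
    have ht1 : 2 ≤ s.t 1 := by
      by_contra hcon
      have hst1 : s.t 1 = 1 := by
        have := s.start_pos; omega
      have halt := s.alt 0
      rw [zero_add, hst1] at halt
      rw [← hzc0] at halt
      exact halt (hcase ▸ rfl)
    refine recode_eq ⟨⟨fun k => s.t k - 1,
      fun a b hab => by show s.t a - 1 < s.t b - 1; have := s.mono hab; omega,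
      by show s.t 0 - 1 ≤ 0; have := s.start_nonpos; omega,
      by show 0 < s.t 1 - 1; omega,
      ?_, ?_⟩, fun k => ?_⟩
    · intro k i hki hik
      have hki' : s.t k - 1 ≤ i := hki
      have hik' : i < s.t (k + 1) - 1 := hik
      show delta v (i + 1) = delta v (s.t k - 1 + 1)
      rw [show s.t k - 1 + 1 = s.t k by ring]
      exact s.const k (i + 1) (by omega) (by omega)
    · intro k
      show delta v (s.t (k + 1) - 1 + 1) ≠ delta v (s.t k - 1 + 1)
      rw [show s.t (k + 1) - 1 + 1 = s.t (k + 1) by ring,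
        show s.t k - 1 + 1 = s.t k by ring]
      exact s.alt k
    · constructor
      · show delta v (s.t k - 1 + 1) = sval (recode (delta v) k)
        rw [show s.t k - 1 + 1 = s.t k by ring]
        exact (hs k).1
      · show (s.t (k + 1) - 1) - (s.t k - 1) = (lval (recode (delta v) k) : ℤ)
        have := (hs k).2
        omega
  · rw [if_pos (hWA.mpr hcase), h1, deltaY_recode hv]
    have hst1 : s.t 1 = 1 := by
      by_contra hcon
      have h2le : 2 ≤ s.t 1 := by have := s.start_pos; omega
      have hc0 : delta v 0 = delta v (s.t 0) :=
        s.const 0 0 s.start_nonpos (by rw [zero_add]; omega)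
      have hc1 : delta v 1 = delta v (s.t 0) :=
        s.const 0 1 (by have := s.start_nonpos; omega) (by rw [zero_add]; omega)
      exact hcase (hc0.trans hc1.symm)
    have := recode_shiftZ_t1 hz s
    rw [hst1] at this
    exact this

lemma stepL : ∀ (L : ℕ) {w : ℤ → ABCD}, w ∈ SmoothY →
    deltaY^[L + 1] (shift w) =
      shift^[if shift w ∈ BY (L + 1) then 1 else 0] (deltaY^[L + 1] w) := by
  intro L
  induction L with
  | zero =>
    intro w hw
    have hc := coreStep hw
    by_cases hWA : WellAligned (shift w)
    · rw [if_pos hWA] at hc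
      have hmem : shift w ∈ BY 1 := by
        refine ⟨smoothY_shift hw, fun l hl => ?_⟩
        obtain rfl : l = 0 := by omega
        exact hWA
      rw [if_pos hmem]
      simpa using hc
    · rw [if_neg hWA] at hc
      have hmem : shift w ∉ BY 1 := fun h => hWA (h.2 0 (by omega))
      rw [if_neg hmem]
      simpa using hc
  | succ L ih =>
    intro w hw
    have hc := coreStep hw
    by_cases hWA : WellAligned (shift w)
    · rw [if_pos hWA] at hc
      have hdw : deltaY w ∈ SmoothY := smoothY_deltaY hw
      have key : deltaY^[L + 1 + 1] (shift w) = deltaY^[L + 1] (shift (deltaY w)) := by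
        rw [Function.iterate_succ_apply, hc]
      have hequiv : (shift w ∈ BY (L + 1 + 1)) ↔ (shift (deltaY w) ∈ BY (L + 1)) := by
        constructor
        · rintro ⟨hsm, hall⟩
          refine ⟨smoothY_shift hdw, fun l hl => ?_⟩
          have hthis := hall (l + 1) (by omega)
          rwa [Function.iterate_succ_apply, hc] at hthis
        · rintro ⟨hsm, hall⟩
          refine ⟨smoothY_shift hw, fun l hl => ?_⟩
          cases l with
          | zero => exact hWA
          | succ l =>
            rw [Function.iterate_succ_apply, hc]
            exact hall l (by omega)
      have hexp : (if shift w ∈ BY (L + 1 + 1) then 1 else 0) =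
          (if shift (deltaY w) ∈ BY (L + 1) then 1 else 0) := by
        by_cases hmem : shift (deltaY w) ∈ BY (L + 1)
        · rw [if_pos hmem, if_pos (hequiv.mpr hmem)]
        · rw [if_neg hmem, if_neg fun h => hmem (hequiv.mp h)]
      rw [key, ih hdw, hexp, ← Function.iterate_succ_apply]
    · rw [if_neg hWA] at hc
      have hmem : shift w ∉ BY (L + 1 + 1) := fun h => hWA (h.2 0 (by omega))
      rw [if_neg hmem]
      simp only [Function.iterate_zero, id_eq]
      rw [Function.iterate_succ_apply, hc, ← Function.iterate_succ_apply]

end AuxStmt1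

/-- Commutation formula.
For all `L ≥ 1`, all `n ≥ 0` and all `y ∈ Y`, `Δ^L (S^n y) = S^{Σ_y^L(n)} (Δ^L y)`. -/
theorem stmt1 (L : ℕ) (hL : 1 ≤ L) (n : ℕ) (y : ℤ → ABCD) (hy : y ∈ SmoothY) :
    deltaY^[L] (shift^[n] y) = shift^[SigY L y n] (deltaY^[L] y) := by
  obtain ⟨L', rfl⟩ : ∃ L', L = L' + 1 := ⟨L - 1, by omega⟩
  induction n with
  | zero =>
    have h0 : SigY (L' + 1) y 0 = 0 := by
      unfold SigY
      rw [Finset.Icc_eq_empty (by omega)]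
      simp
    rw [h0]
    rfl
  | succ n ihn =>
    have hmem : ∀ m : ℕ, shift^[m] y ∈ SmoothY := by
      intro m
      induction m with
      | zero => exact hy
      | succ m ih =>
        rw [Function.iterate_succ_apply']
        exact smoothY_shift ih
    have hstep := stepL L' (hmem n)
    have hins : Finset.Icc 1 (n + 1) = insert (n + 1) (Finset.Icc 1 n) := by
      rw [← Finset.insert_Icc_right_eq_Icc_add_one (by omega)]
    have hSig : SigY (L' + 1) y (n + 1) =
        (if shift (shift^[n] y) ∈ BY (L' + 1) then 1 else 0) + SigY (L' + 1) y n := by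
      unfold SigY
      rw [hins, Finset.filter_insert]
      by_cases hb : shift^[n + 1] y ∈ BY (L' + 1)
      · rw [if_pos hb,
          if_pos (show shift (shift^[n] y) ∈ BY (L' + 1) by
            rwa [Function.iterate_succ_apply'] at hb),
          Finset.card_insert_of_notMem (by simp)]
        omega
      · rw [if_neg hb,
          if_neg (show ¬ shift (shift^[n] y) ∈ BY (L' + 1) by
            rwa [Function.iterate_succ_apply'] at hb)]
        omega
    rw [hSig, Function.iterate_succ_apply' shift n y, hstep, ihn,
      ← Function.iterate_add_apply]
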